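/- Let Σ be the free monoid on a nonempty finite or countable alphabet W, and let μ be a probability measure on Σ with μ(e) < 1, where e is the empty word. Then for μ^ℕ-almost every increment sequence (g_n)_{n≥1}, the word lengths |x_n| of the positions x_n = g_1⋯g_n tend to infinity, and there exists a unique infinite word ξ ∈ W^ℕ such that every x_n is a prefix of ξ. -/

import Mathlib

open MeasureTheory ProbabilityTheory Filter

namespace Stmt17

noncomputable instance {W : Type*} : MeasurableSpace (FreeMonoid W) := ⊤

/-- The position of the random walk at time `n`: the product of the first `n` increments. -/
def pos {W Ω : Type*} (g : ℕ → Ω → FreeMonoid W) (n : ℕ) (ω : Ω) : FreeMonoid W :=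
  ((List.range n).map (fun i => g i ω)).prod

/-- The finite word `v` is a prefix of the infinite word `ξ`. -/
def IsPrefixOf {W : Type*} (v : FreeMonoid W) (ξ : ℕ → W) : Prop :=
  ∀ i : Fin (FreeMonoid.toList v).length, (FreeMonoid.toList v).get i = ξ i

lemma pos_succ {W Ω : Type*} (g : ℕ → Ω → FreeMonoid W) (n : ℕ) (ω : Ω) :
    pos g (n + 1) ω = pos g n ω * g n ω := by
  simp [pos, List.range_succ]

lemma pos_prefix {W Ω : Type*} (g : ℕ → Ω → FreeMonoid W) (ω : Ω) {m n : ℕ} (h : m ≤ n) :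
    FreeMonoid.toList (pos g m ω) <+: FreeMonoid.toList (pos g n ω) := by
  induction n with
  | zero => simp_all
  | succ n ih =>
    rcases Nat.lt_or_ge m (n + 1) with hm | hm
    · refine (ih (Nat.lt_succ_iff.mp hm)).trans ?_
      rw [pos_succ, FreeMonoid.toList_mul]
      exact List.prefix_append _ _
    · have : m = n + 1 := le_antisymm h hm
      subst this
      exact List.prefix_refl _

lemma length_pos_mono {W Ω : Type*} (g : ℕ → Ω → FreeMonoid W) (ω : Ω) :
    Monotone (fun n => FreeMonoid.length (pos g n ω)) := by
  intro m n hmn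
  exact (pos_prefix g ω hmn).length_le

/-- Deterministic part: if infinitely many increments are nontrivial,
then the lengths tend to infinity. -/
lemma tendsto_length_of_frequently {W Ω : Type*} (g : ℕ → Ω → FreeMonoid W) (ω : Ω)
    (hfreq : ∃ᶠ n in atTop, g n ω ≠ 1) :
    Tendsto (fun n => FreeMonoid.length (pos g n ω)) atTop atTop := by
  refine tendsto_atTop_atTop_of_monotone (length_pos_mono g ω) ?_
  intro b
  induction b with
  | zero => exact ⟨0, Nat.zero_le _⟩
  | succ b ih =>
    obtain ⟨n, hn⟩ := ih
    obtain ⟨m, hm, hm1⟩ := (frequently_atTop.mp hfreq) n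
    refine ⟨m + 1, ?_⟩
    have h1 : 1 ≤ FreeMonoid.length (g m ω) := by
      rcases Nat.eq_zero_or_pos (FreeMonoid.length (g m ω)) with h | h
      · exact absurd (FreeMonoid.toList.injective (by simpa [FreeMonoid.length] using h)) hm1
      · exact h
    have hmon : FreeMonoid.length (pos g n ω) ≤ FreeMonoid.length (pos g m ω) :=
      length_pos_mono g ω hm
    rw [pos_succ, FreeMonoid.length_mul]
    omega

/-- Deterministic part: if lengths tend to infinity, there is a unique limiting infinite word. -/
lemma existsUnique_of_tendsto {W Ω : Type*} (g : ℕ → Ω → FreeMonoid W) (ω : Ω)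
    (ht : Tendsto (fun n => FreeMonoid.length (pos g n ω)) atTop atTop) :
    ∃! ξ : ℕ → W, ∀ n, IsPrefixOf (pos g n ω) ξ := by
  classical
  have hex : ∀ k : ℕ, ∃ n, k < (FreeMonoid.toList (pos g n ω)).length := by
    intro k
    obtain ⟨n, hn⟩ := (tendsto_atTop.mp ht (k + 1)).exists
    exact ⟨n, hn⟩
  set N : ℕ → ℕ := fun k => (hex k).choose with hN
  have hNk : ∀ k, k < (FreeMonoid.toList (pos g (N k) ω)).length := fun k => (hex k).choose_spec
  set ξ : ℕ → W := fun k => (FreeMonoid.toList (pos g (N k) ω)).get ⟨k, hNk k⟩ with hξ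
  have key : ∀ (n k : ℕ) (hk : k < (FreeMonoid.toList (pos g n ω)).length),
      (FreeMonoid.toList (pos g n ω)).get ⟨k, hk⟩ = ξ k := by
    intro n k hk
    have h1 := pos_prefix g ω (le_max_left n (N k))
    have h2 := pos_prefix g ω (le_max_right n (N k))
    have e1 : (FreeMonoid.toList (pos g n ω)).get ⟨k, hk⟩ = (FreeMonoid.toList (pos g (max n (N k)) ω)).get ⟨k, Nat.le_trans hk h1.length_le⟩ := h1.getElem hk
    have e2 : (FreeMonoid.toList (pos g (N k) ω)).get ⟨k, hNk k⟩ = (FreeMonoid.toList (pos g (max n (N k)) ω)).get ⟨k, Nat.le_trans (hNk k) h2.length_le⟩ := h2.getElem (hNk k)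
    simp only [hξ]
    rw [e1, e2]
  refine ⟨ξ, fun n i => key n i i.isLt, ?_⟩
  intro ξ' hξ'
  funext k
  have h := hξ' (N k) ⟨k, hNk k⟩
  simpa [hξ] using h.symm

/-- Let `μ` be a probability measure on the free monoid on a nonempty countable alphabet with
`μ(e) < 1`.  Then for almost every increment sequence `(g_n)` (i.i.d. with law `μ`), the word
lengths `|x_n|` of the positions `x_n = g_1 ⋯ g_n` tend to infinity, and there is a unique
infinite word `ξ ∈ W^ℕ` of which every `x_n` is a prefix. -/
theorem walk_converges_to_unique_infinite_word
    {W : Type*} [Countable W] [Nonempty W]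
    (μ : Measure (FreeMonoid W)) [IsProbabilityMeasure μ]
    (he : μ {(1 : FreeMonoid W)} < 1)
    {Ω : Type*} [MeasurableSpace Ω] (P : Measure Ω) [IsProbabilityMeasure P]
    (g : ℕ → Ω → FreeMonoid W) (hgm : ∀ n, Measurable (g n))
    (hindep : iIndepFun (m := fun _ => (⊤ : MeasurableSpace (FreeMonoid W))) g P)
    (hlaw : ∀ n, Measure.map (g n) P = μ) :
    ∀ᵐ ω ∂P,
      Tendsto (fun n => FreeMonoid.length (pos g n ω)) atTop atTop ∧
        ∃! ξ : ℕ → W, ∀ n, IsPrefixOf (pos g n ω) ξ := by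
  classical
  set s : ℕ → Set Ω := fun i => g i ⁻¹' {1}ᶜ with hs_def
  have hsm : ∀ i, MeasurableSet (s i) := fun i => (hgm i) (by trivial)
  have hmeas_i : ∀ i, P (s i) = μ ({1}ᶜ) := by
    intro i
    rw [← hlaw i, Measure.map_apply (hgm i) (by trivial)]
  have hpos : μ ({1}ᶜ) ≠ 0 := by
    intro h
    have h1 : μ {(1 : FreeMonoid W)} = 1 := by
      have h2 := measure_add_measure_compl (μ := μ) (s := {(1 : FreeMonoid W)}) (by trivial)
      rw [h, add_zero, measure_univ] at h2
      exact h2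
    exact absurd h1 (ne_of_lt he)
  have hindepset : iIndepSet s P :=
    (iIndepSet_iff_meas_biInter hsm).2 fun S =>
      hindep.meas_biInter (fun i _ => ⟨{1}ᶜ, trivial, rfl⟩)
  have htsum : (∑' n, P (s n)) = (⊤ : ENNReal) := by
    simp_rw [hmeas_i]
    exact ENNReal.tsum_const_eq_top_of_ne_zero hpos
  have hBC : P (limsup s atTop) = 1 := measure_limsup_eq_one hsm hindepset htsum
  have hae : ∀ᵐ ω ∂P, ω ∈ limsup s atTop := by
    rw [ae_iff]
    have hcompl : {ω | ¬ ω ∈ limsup s atTop} = (limsup s atTop)ᶜ := rfl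
    rw [hcompl, measure_compl (MeasurableSet.measurableSet_limsup hsm) (measure_ne_top _ _),
      hBC, measure_univ, tsub_self]
  refine hae.mono fun ω hω => ?_
  have hfreq : ∃ᶠ n in atTop, g n ω ≠ 1 := by
    have := mem_limsup_iff_frequently_mem.mp hω
    simpa [hs_def] using this
  have ht := tendsto_length_of_frequently g ω hfreq
  exact ⟨ht, existsUnique_of_tendsto g ω ht⟩

end Stmt17
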